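/- For any hypergraph pair (H, A) (A a sub-hypergraph of H), there is a long exact sequence of relative embedded homology: ⋯ → H_n(A) → H_n(H) → H_n(H, A) → H_{n-1}(A) → ⋯. -/

import Mathlib

/-- Oriented `n`-simplices on a vertex set `V`: finsets of cardinality `n+1`. -/
abbrev Simp (V : Type) (n : ℕ) : Type := {σ : Finset V // σ.card = n + 1}

/-- The group of `n`-chains with coefficients in `G` on the full simplex on `V`. -/
abbrev Ch (V : Type) (G : Type) [AddCommGroup G] (n : ℕ) : Type := Simp V n →₀ G

/-- Boundary of a single `(n+1)`-simplex with coefficient `g`. -/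
noncomputable def bdryFun (V : Type) [LinearOrder V] (G : Type) [AddCommGroup G]
    (n : ℕ) (σ : Simp V (n + 1)) (g : G) : Ch V G n :=
  ∑ v ∈ σ.1.attach, Finsupp.single
    ⟨σ.1.erase v.1, by rw [Finset.card_erase_of_mem v.2, σ.2]; omega⟩
    (((-1 : ℤ) ^ ((σ.1.filter fun w => w < v.1).card)) • g)

/-- The simplicial boundary homomorphism `C_{n+1} → C_n`. -/
noncomputable def bdry (V : Type) [LinearOrder V] (G : Type) [AddCommGroup G]
    (n : ℕ) : Ch V G (n + 1) →+ Ch V G n :=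
  Finsupp.liftAddHom fun σ =>
    { toFun := bdryFun V G n σ
      map_zero' := by simp [bdryFun]
      map_add' := fun a b => by
        simp [bdryFun, smul_add, Finsupp.single_add, Finset.sum_add_distrib] }

/-- The subgroup `G(K)_n ⊆ C_n` of chains supported on the `n`-hyperedges of `K`. -/
def chainsOn (V : Type) [LinearOrder V] (G : Type) [AddCommGroup G]
    (K : Set (Finset V)) (n : ℕ) : AddSubgroup (Ch V G n) where
  carrier := {c | ∀ σ ∈ c.support, (σ : Simp V n).1 ∈ K}
  zero_mem' := by simp
  add_mem' := by
    intro a b ha hb σ hσ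
    rcases Finset.mem_union.mp (Finsupp.support_add hσ) with h | h
    exacts [ha σ h, hb σ h]
  neg_mem' := by
    intro a ha σ hσ
    exact ha σ (by simpa using hσ)

section Generic

variable {C : ℕ → Type} [∀ n, AddCommGroup (C n)]

/-- The infimum chain complex of a graded subgroup `D` inside `(C, d)`. -/
def InfC (d : ∀ n, C (n + 1) →+ C n) (D : ∀ n, AddSubgroup (C n)) :
    ∀ n, AddSubgroup (C n)
  | 0 => D 0
  | (n + 1) => D (n + 1) ⊓ (D n).comap (d n)

/-- The supremum chain complex of a graded subgroup `D` inside `(C, d)`. -/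
def SupC (d : ∀ n, C (n + 1) →+ C n) (D : ∀ n, AddSubgroup (C n)) (n : ℕ) :
    AddSubgroup (C n) :=
  D n ⊔ (D (n + 1)).map (d n)

/-- Relative cycles of the pair of graded subgroups `(K, L)`. -/
def relZ (d : ∀ n, C (n + 1) →+ C n) (K L : ∀ n, AddSubgroup (C n)) :
    ∀ n, AddSubgroup (C n)
  | 0 => K 0
  | (n + 1) => K (n + 1) ⊓ (L n).comap (d n)

/-- Relative boundaries of the pair of graded subgroups `(K, L)`. -/
def relB (d : ∀ n, C (n + 1) →+ C n) (K L : ∀ n, AddSubgroup (C n)) (n : ℕ) :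
    AddSubgroup (C n) :=
  ((K (n + 1)).map (d n) ⊔ L n) ⊓ relZ d K L n

/-- Relative homology of the pair `(K, L)`, i.e. the homology of the quotient chain
complex `K/L`.  (Taking `L = ⊥` gives the absolute homology of `K`.) -/
abbrev relH (d : ∀ n, C (n + 1) →+ C n) (K L : ∀ n, AddSubgroup (C n)) (n : ℕ) : Type _ :=
  relZ d K L n ⧸ (relB d K L n).addSubgroupOf (relZ d K L n)

theorem relZ_mono (d : ∀ n, C (n + 1) →+ C n) {K L K' L' : ∀ n, AddSubgroup (C n)}
    (hK : ∀ n, K n ≤ K' n) (hL : ∀ n, L n ≤ L' n) :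
    ∀ n, relZ d K L n ≤ relZ d K' L' n
  | 0 => hK 0
  | (n + 1) => inf_le_inf (hK (n + 1)) (AddSubgroup.comap_mono (hL n))

theorem relB_mono (d : ∀ n, C (n + 1) →+ C n) {K L K' L' : ∀ n, AddSubgroup (C n)}
    (hK : ∀ n, K n ≤ K' n) (hL : ∀ n, L n ≤ L' n) (n : ℕ) :
    relB d K L n ≤ relB d K' L' n :=
  inf_le_inf (sup_le_sup (AddSubgroup.map_mono (hK (n + 1))) (hL n))
    (relZ_mono d hK hL n)

/-- The map on relative homology induced by an inclusion of pairs. -/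
noncomputable def inducedRelMap (d : ∀ n, C (n + 1) →+ C n)
    {K L K' L' : ∀ n, AddSubgroup (C n)}
    (hK : ∀ n, K n ≤ K' n) (hL : ∀ n, L n ≤ L' n) (n : ℕ) :
    relH d K L n →+ relH d K' L' n :=
  QuotientAddGroup.map _ _ (AddSubgroup.inclusion (relZ_mono d hK hL n)) (by
    intro x hx
    simp only [AddSubgroup.mem_comap, AddSubgroup.mem_addSubgroupOf,
      AddSubgroup.coe_inclusion] at hx ⊢
    exact relB_mono d hK hL n hx)

theorem InfC_le_SupC (d : ∀ n, C (n + 1) →+ C n) (D : ∀ n, AddSubgroup (C n)) :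
    ∀ n, InfC d D n ≤ SupC d D n := by
  intro n
  cases n with
  | zero => exact le_sup_left
  | succ n => exact le_trans inf_le_left le_sup_left

theorem InfC_mono (d : ∀ n, C (n + 1) →+ C n) {D D' : ∀ n, AddSubgroup (C n)}
    (h : ∀ n, D n ≤ D' n) : ∀ n, InfC d D n ≤ InfC d D' n
  | 0 => h 0
  | (n + 1) => inf_le_inf (h (n + 1)) (AddSubgroup.comap_mono (h n))

end Generic

theorem chainsOn_mono (V : Type) [LinearOrder V] (G : Type) [AddCommGroup G]
    {K K' : Set (Finset V)} (h : K ⊆ K') (n : ℕ) :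
    chainsOn V G K n ≤ chainsOn V G K' n := by
  intro c hc σ hσ
  exact h (hc σ hσ)

/-- The map on embedded homology induced by an inclusion of hypergraphs `A ⊆ H`. -/
noncomputable def embIncl (V : Type) [LinearOrder V] (G : Type) [AddCommGroup G]
    {A H : Set (Finset V)} (hA : A ⊆ H) (n : ℕ) :
    relH (bdry V G) (InfC (bdry V G) fun m => chainsOn V G A m) (fun _ => ⊥) n →+
      relH (bdry V G) (InfC (bdry V G) fun m => chainsOn V G H m) (fun _ => ⊥) n :=
  inducedRelMap (bdry V G) (InfC_mono (bdry V G) fun m => chainsOn_mono V G hA m)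
    (fun _ => le_rfl) n

/-- The map from the embedded homology of `H` to the relative embedded homology of the
pair `(H, A)`. -/
noncomputable def embQuot (V : Type) [LinearOrder V] (G : Type) [AddCommGroup G]
    (H A : Set (Finset V)) (n : ℕ) :
    relH (bdry V G) (InfC (bdry V G) fun m => chainsOn V G H m) (fun _ => ⊥) n →+
      relH (bdry V G) (InfC (bdry V G) fun m => chainsOn V G H m)
        (InfC (bdry V G) fun m => chainsOn V G A m) n :=
  inducedRelMap (bdry V G) (fun _ => le_rfl) (fun _ => bot_le) n

theorem bdry_single (V : Type) [LinearOrder V] (G : Type) [AddCommGroup G]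
    (n : ℕ) (σ : Simp V (n+1)) (g : G) :
    bdry V G n (Finsupp.single σ g) = bdryFun V G n σ g := by
  simp only [bdry, Finsupp.liftAddHom_apply_single]
  rfl

theorem sum_erase_eq_offDiag {α M : Type*} [DecidableEq α] [AddCommMonoid M] (s : Finset α)
    (f : α → α → M) :
    ∑ v ∈ s, ∑ u ∈ s.erase v, f v u = ∑ p ∈ s.offDiag, f p.1 p.2 := by
  rw [show s.offDiag = (s ×ˢ s).filter (fun a => a.1 ≠ a.2) by ext; simp [and_assoc],
    Finset.sum_filter, Finset.sum_product]
  refine Finset.sum_congr rfl fun v hv => ?_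
  rw [← Finset.sum_filter]
  congr 1
  ext u
  simp only [Finset.mem_erase, Finset.mem_filter]
  tauto

theorem sign_cancel_aux {V : Type} [LinearOrder V] (σ : Finset V) {u v : V}
    (hu : u ∈ σ) (hv : v ∈ σ) (huv : u < v) :
    ((-1:ℤ) ^ (((σ.erase v).filter fun w => w < u).card) * (-1:ℤ) ^ ((σ.filter fun w => w < v).card))
    + ((-1:ℤ) ^ (((σ.erase u).filter fun w => w < v).card) * (-1:ℤ) ^ ((σ.filter fun w => w < u).card)) = 0 := by
  have h1 : ((σ.erase v).filter fun w => w < u) = σ.filter fun w => w < u := by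
    rw [Finset.filter_erase, Finset.erase_eq_of_notMem]
    simp only [Finset.mem_filter]
    exact fun h => absurd h.2 (not_lt.2 huv.le)
  have h2 : ((σ.erase u).filter fun w => w < v) = (σ.filter fun w => w < v).erase u := by
    rw [Finset.filter_erase]
  have hum : u ∈ σ.filter fun w => w < v := Finset.mem_filter.2 ⟨hu, huv⟩
  have h3 : ((σ.filter fun w => w < v).erase u).card + 1 = (σ.filter fun w => w < v).card := by
    rw [Finset.card_erase_of_mem hum]
    have : 1 ≤ (σ.filter fun w => w < v).card := Finset.card_pos.2 ⟨u, hum⟩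
    omega
  rw [h1, h2, ← h3, pow_succ]
  ring



theorem sign_cancel {V : Type} [LinearOrder V] (σ : Finset V) {u v : V}
    (hu : u ∈ σ) (hv : v ∈ σ) (huv : u ≠ v) :
    ((-1:ℤ) ^ (((σ.erase v).filter fun w => w < u).card) * (-1:ℤ) ^ ((σ.filter fun w => w < v).card))
    + ((-1:ℤ) ^ (((σ.erase u).filter fun w => w < v).card) * (-1:ℤ) ^ ((σ.filter fun w => w < u).card)) = 0 := by
  rcases huv.lt_or_gt with h | h
  · exact sign_cancel_aux σ hu hv h
  · rw [add_comm]; exact sign_cancel_aux σ hv hu h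

theorem Finsupp_single_add_single_eq_zero {α M : Type*} [AddCommGroup M] {a b : α} (h : a = b)
    {x y : M} (hxy : x + y = 0) : Finsupp.single a x + Finsupp.single b y = 0 := by
  subst h
  rw [← Finsupp.single_add, hxy, Finsupp.single_zero]

noncomputable def ddTerm (V : Type) [LinearOrder V] (G : Type) [AddCommGroup G] (n : ℕ)
    (σ : Simp V (n+2)) (g : G) (p : V × V) : Ch V G n :=
  if h : p ∈ σ.1.offDiag then
    Finsupp.single ⟨(σ.1.erase p.1).erase p.2, by
      have h' := Finset.mem_offDiag.mp h
      rw [Finset.card_erase_of_mem (Finset.mem_erase.mpr ⟨h'.2.2.symm, h'.2.1⟩),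
        Finset.card_erase_of_mem h'.1, σ.2]; omega⟩
      (((((-1:ℤ) ^ (((σ.1.erase p.1).filter fun w => w < p.2).card)) *
        ((-1:ℤ) ^ ((σ.1.filter fun w => w < p.1).card)))) • g)
  else 0

theorem bdry_bdryFun (V : Type) [LinearOrder V] (G : Type) [AddCommGroup G] (n : ℕ)
    (σ : Simp V (n+2)) (g : G) : bdry V G n (bdryFun V G (n+1) σ g) = 0 := by
  classical
  rw [bdryFun, map_sum]
  have step : ∀ v ∈ σ.1.attach,
      bdry V G n (Finsupp.single
        (⟨σ.1.erase v.1, by rw [Finset.card_erase_of_mem v.2, σ.2]; omega⟩ : Simp V (n+1))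
        (((-1 : ℤ) ^ ((σ.1.filter fun w => w < v.1).card)) • g))
      = ∑ u ∈ σ.1.erase v.1, ddTerm V G n σ g (v.1, u) := by
    intro v _
    rw [bdry_single, bdryFun,
      ← Finset.sum_attach (σ.1.erase v.1) (fun u => ddTerm V G n σ g (v.1, u))]
    refine Finset.sum_congr rfl fun u _ => ?_
    have hmem : (v.1, u.1) ∈ σ.1.offDiag :=
      Finset.mem_offDiag.mpr ⟨v.2, Finset.mem_of_mem_erase u.2,
        (Finset.ne_of_mem_erase u.2).symm⟩
    simp only [smul_smul, ddTerm, dif_pos hmem]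
  rw [Finset.sum_congr rfl step,
    Finset.sum_attach σ.1 (fun v => ∑ u ∈ σ.1.erase v, ddTerm V G n σ g (v, u)),
    sum_erase_eq_offDiag σ.1 (fun v u => ddTerm V G n σ g (v, u))]
  refine Finset.sum_involution (fun p _ => p.swap) ?_ ?_ ?_ ?_
  · rintro ⟨a, b⟩ hp
    obtain ⟨ha, hb, hab⟩ := Finset.mem_offDiag.mp hp
    have hswap : ((b, a) : V × V) ∈ σ.1.offDiag :=
      Finset.mem_offDiag.mpr ⟨hb, ha, hab.symm⟩
    simp only [Prod.swap_prod_mk, ddTerm, dif_pos hp, dif_pos hswap]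
    refine Finsupp_single_add_single_eq_zero (Subtype.ext ?_) ?_
    · exact Finset.erase_right_comm
    · rw [← add_smul, sign_cancel σ.1 hb ha hab.symm, zero_smul]
  · rintro ⟨a, b⟩ hp _
    obtain ⟨-, -, hab⟩ := Finset.mem_offDiag.mp hp
    simp only [Prod.swap_prod_mk, Ne, Prod.mk.injEq, not_and]
    exact fun h _ => hab h.symm
  · rintro ⟨a, b⟩ hp
    obtain ⟨ha, hb, hab⟩ := Finset.mem_offDiag.mp hp
    exact Finset.mem_offDiag.mpr ⟨hb, ha, hab.symm⟩
  · rintro ⟨a, b⟩ _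
    rfl

theorem bdry_bdry (V : Type) [LinearOrder V] (G : Type) [AddCommGroup G] (n : ℕ)
    (x : Ch V G (n+2)) : bdry V G n (bdry V G (n+1) x) = 0 := by
  induction x using Finsupp.induction with
  | zero => simp
  | single_add σ g f _ _ ih =>
    rw [map_add, map_add, ih, add_zero, bdry_single, bdry_bdryFun]


section Snake

variable {C : ℕ → Type} [∀ n, AddCommGroup (C n)]
variable (d : ∀ n, C (n + 1) →+ C n) (K L : ∀ n, AddSubgroup (C n))

theorem mem_relZ_succ {n : ℕ} {x : C (n + 1)} :
    x ∈ relZ d K L (n + 1) ↔ x ∈ K (n + 1) ∧ d n x ∈ L n := by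
  simp [relZ, AddSubgroup.mem_inf, AddSubgroup.mem_comap]

theorem mem_relZ_zero {x : C 0} : x ∈ relZ d K L 0 ↔ x ∈ K 0 := Iff.rfl

theorem relZ_le_fst : ∀ n, relZ d K L n ≤ K n
  | 0 => le_rfl
  | (n + 1) => inf_le_left


/-- The image of a relative cycle under `d` is an absolute cycle of `L`. -/
theorem d_mem_absZ (hdd : ∀ n (x : C (n + 2)), d n (d (n + 1) x) = 0) {n : ℕ} {x : C (n + 1)} (hx : d n x ∈ L n) :
    d n x ∈ relZ d L (fun _ => ⊥) n := by
  cases n with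
  | zero => exact hx
  | succ m =>
    refine (mem_relZ_succ d L _).mpr ⟨hx, ?_⟩
    simp [hdd m x]

/-- Boundaries of elements of `K` are absolute cycles of `K`. -/
theorem dK_mem_absZ (hdd : ∀ n (x : C (n + 2)), d n (d (n + 1) x) = 0)
    (hdK : ∀ n, ∀ x ∈ K (n + 1), d n x ∈ K n) {n : ℕ} {x : C (n + 1)} (hx : x ∈ K (n + 1)) :
    d n x ∈ relZ d K (fun _ => ⊥) n := by
  cases n with
  | zero => exact hdK 0 x hx
  | succ m =>
    refine (mem_relZ_succ d K _).mpr ⟨hdK (m + 1) x hx, ?_⟩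
    simp [hdd m x]

/-- Absolute cycles of `L` lie in `L`. -/
theorem absZ_le : ∀ n, relZ d L (fun _ => ⊥) n ≤ L n
  | 0 => le_rfl
  | (n + 1) => inf_le_left

/-- Elements of `L` are relative cycles of the pair `(K, L)`. -/
theorem L_le_relZ (hLK : ∀ n, L n ≤ K n)
    (hdL : ∀ n, ∀ x ∈ L (n + 1), d n x ∈ L n) (n : ℕ) : L n ≤ relZ d K L n := by
  cases n with
  | zero => exact hLK 0
  | succ m =>
    intro x hx
    exact (mem_relZ_succ d K L).mpr ⟨hLK (m + 1) hx, hdL m x hx⟩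

/-- The connecting homomorphism on cycles: `z ↦ d z`. -/
noncomputable def connZ (hdd : ∀ n (x : C (n + 2)), d n (d (n + 1) x) = 0) (n : ℕ) :
    (relZ d K L (n + 1)) →+ (relZ d L (fun _ => ⊥) n) where
  toFun z := ⟨d n z.1, d_mem_absZ d L hdd ((mem_relZ_succ d K L).mp z.2).2⟩
  map_zero' := Subtype.ext (by simp)
  map_add' a b := Subtype.ext (by simp)

/-- The connecting homomorphism on homology. -/
noncomputable def connH (hdd : ∀ n (x : C (n + 2)), d n (d (n + 1) x) = 0) (n : ℕ) :
    relH d K L (n + 1) →+ relH d L (fun _ => ⊥) n :=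
  QuotientAddGroup.map _ _ (connZ d K L hdd n) (by
    intro z hz
    rw [AddSubgroup.mem_addSubgroupOf] at hz
    rw [AddSubgroup.mem_comap, AddSubgroup.mem_addSubgroupOf]
    obtain ⟨hz1, hz2⟩ := (AddSubgroup.mem_inf.mp hz)
    obtain ⟨y, hy, l, hl, hyl⟩ := AddSubgroup.mem_sup.mp hz1
    obtain ⟨w, hw, rfl⟩ := AddSubgroup.mem_map.mp hy
    refine AddSubgroup.mem_inf.mpr ⟨?_, (connZ d K L hdd n z).2⟩
    refine AddSubgroup.mem_sup.mpr ⟨d n l, AddSubgroup.mem_map.mpr ⟨l, hl, rfl⟩, 0,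
      AddSubgroup.mem_bot.mpr rfl, ?_⟩
    show d n l + 0 = d n z.1
    rw [add_zero, ← hyl, map_add, hdd n w, zero_add])

theorem exact_incl_quot (hdd : ∀ n (x : C (n + 2)), d n (d (n + 1) x) = 0)
    (hLK : ∀ n, L n ≤ K n)
    (hdK : ∀ n, ∀ x ∈ K (n + 1), d n x ∈ K n)
    (hdL : ∀ n, ∀ x ∈ L (n + 1), d n x ∈ L n) (n : ℕ) :
    Function.Exact
      (inducedRelMap d hLK (fun _ => le_rfl) n :
        relH d L (fun _ => ⊥) n →+ relH d K (fun _ => ⊥) n)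
      (inducedRelMap d (fun _ => le_rfl) (fun _ => bot_le) n :
        relH d K (fun _ => ⊥) n →+ relH d K L n) := by
  intro y
  induction y using QuotientAddGroup.induction_on with | _ z => ?_
  rw [inducedRelMap, QuotientAddGroup.map_mk, QuotientAddGroup.eq_zero_iff,
    AddSubgroup.mem_addSubgroupOf, AddSubgroup.coe_inclusion]
  constructor
  · intro hz
    obtain ⟨hz1, hz2⟩ := AddSubgroup.mem_inf.mp hz
    obtain ⟨y, hy, l, hl, hyl⟩ := AddSubgroup.mem_sup.mp hz1
    obtain ⟨w, hw, rfl⟩ := AddSubgroup.mem_map.mp hy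
    have hlZ : l ∈ relZ d L (fun _ => ⊥) n := by
      cases n with
      | zero => exact hl
      | succ m =>
        refine (mem_relZ_succ d L _).mpr ⟨hl, AddSubgroup.mem_bot.mpr ?_⟩
        have hz0 : d m z.1 = 0 :=
          AddSubgroup.mem_bot.mp ((mem_relZ_succ d K _).mp z.2).2
        have : d m (d (m + 1) w) = 0 := hdd m w
        calc d m l = d m (d (m + 1) w + l) - d m (d (m + 1) w) := by
              rw [map_add]; abel
          _ = 0 := by rw [hyl, hz0, this, sub_zero]
    refine ⟨QuotientAddGroup.mk ⟨l, hlZ⟩, ?_⟩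
    rw [inducedRelMap, QuotientAddGroup.map_mk]
    rw [QuotientAddGroup.eq]
    rw [AddSubgroup.mem_addSubgroupOf]
    show -(l : C n) + z.1 ∈ relB d K (fun _ => ⊥) n
    have hdw : -(l : C n) + z.1 = d n w := by rw [← hyl]; abel
    rw [hdw]
    exact AddSubgroup.mem_inf.mpr
      ⟨AddSubgroup.mem_sup.mpr ⟨d n w, AddSubgroup.mem_map.mpr ⟨w, hw, rfl⟩, 0,
        AddSubgroup.mem_bot.mpr rfl, add_zero _⟩, dK_mem_absZ d K hdd hdK hw⟩
  · rintro ⟨q, hq⟩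
    induction q using QuotientAddGroup.induction_on with | _ u => ?_
    rw [inducedRelMap, QuotientAddGroup.map_mk, QuotientAddGroup.eq,
      AddSubgroup.mem_addSubgroupOf] at hq
    have hq' : -(u : C n) + z.1 ∈ relB d K (fun _ => ⊥) n := hq
    obtain ⟨hb1, hb2⟩ := AddSubgroup.mem_inf.mp hq'
    obtain ⟨y, hy, c, hc, hyc⟩ := AddSubgroup.mem_sup.mp hb1
    obtain ⟨w, hw, rfl⟩ := AddSubgroup.mem_map.mp hy
    have hc0 : c = 0 := AddSubgroup.mem_bot.mp hc
    refine AddSubgroup.mem_inf.mpr ⟨?_, relZ_mono d (fun _ => le_rfl) (fun _ => bot_le) n z.2⟩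
    refine AddSubgroup.mem_sup.mpr ⟨d n w, AddSubgroup.mem_map.mpr ⟨w, hw, rfl⟩,
      (u : C n), absZ_le d L n u.2, ?_⟩
    have : d n w = -(u : C n) + z.1 := by rw [← hyc, hc0, add_zero]
    rw [this]; abel

theorem exact_quot_conn (hdd : ∀ n (x : C (n + 2)), d n (d (n + 1) x) = 0)
    (hLK : ∀ n, L n ≤ K n)
    (hdK : ∀ n, ∀ x ∈ K (n + 1), d n x ∈ K n)
    (hdL : ∀ n, ∀ x ∈ L (n + 1), d n x ∈ L n) (n : ℕ) :
    Function.Exact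
      (inducedRelMap d (fun _ => le_rfl) (fun _ => bot_le) (n + 1) :
        relH d K (fun _ => ⊥) (n + 1) →+ relH d K L (n + 1))
      (connH d K L hdd n) := by
  intro y
  induction y using QuotientAddGroup.induction_on with | _ z => ?_
  rw [connH, QuotientAddGroup.map_mk, QuotientAddGroup.eq_zero_iff,
    AddSubgroup.mem_addSubgroupOf]
  constructor
  · intro hz
    have hz' : d (n) z.1 ∈ relB d L (fun _ => ⊥) n := hz
    obtain ⟨hb1, hb2⟩ := AddSubgroup.mem_inf.mp hz'
    obtain ⟨y, hy, c, hc, hyc⟩ := AddSubgroup.mem_sup.mp hb1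
    obtain ⟨l, hl, rfl⟩ := AddSubgroup.mem_map.mp hy
    have hc0 : c = 0 := AddSubgroup.mem_bot.mp hc
    have hdzl : d n (z.1 - l) = 0 := by
      rw [map_sub, sub_eq_zero, ← hyc, hc0, add_zero]
    have huZ : z.1 - l ∈ relZ d K (fun _ => ⊥) (n + 1) :=
      (mem_relZ_succ d K _).mpr
        ⟨sub_mem (relZ_le_fst d K L (n + 1) z.2) (hLK (n + 1) hl),
          AddSubgroup.mem_bot.mpr hdzl⟩
    refine ⟨QuotientAddGroup.mk ⟨z.1 - l, huZ⟩, ?_⟩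
    rw [inducedRelMap, QuotientAddGroup.map_mk, QuotientAddGroup.eq,
      AddSubgroup.mem_addSubgroupOf]
    show -(z.1 - l) + z.1 ∈ relB d K L (n + 1)
    have : -(z.1 - l) + z.1 = l := by abel
    rw [this]
    exact AddSubgroup.mem_inf.mpr
      ⟨AddSubgroup.mem_sup.mpr ⟨0, zero_mem _, l, hl, zero_add _⟩,
        L_le_relZ d K L hLK hdL (n + 1) hl⟩
  · rintro ⟨q, hq⟩
    induction q using QuotientAddGroup.induction_on with | _ u => ?_
    rw [inducedRelMap, QuotientAddGroup.map_mk, QuotientAddGroup.eq,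
      AddSubgroup.mem_addSubgroupOf] at hq
    have hq' : -(u : C (n + 1)) + z.1 ∈ relB d K L (n + 1) := hq
    obtain ⟨hb1, hb2⟩ := AddSubgroup.mem_inf.mp hq'
    obtain ⟨y, hy, l, hl, hyl⟩ := AddSubgroup.mem_sup.mp hb1
    obtain ⟨w, hw, rfl⟩ := AddSubgroup.mem_map.mp hy
    show d n z.1 ∈ relB d L (fun _ => ⊥) n
    have hdu : d n u.1 = 0 := AddSubgroup.mem_bot.mp ((mem_relZ_succ d K _).mp u.2).2
    have hdz : d n z.1 = d n l := by
      have h1 : z.1 = u.1 + (d (n + 1) w + l) := by rw [hyl]; abel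
      rw [h1, map_add, map_add, hdu, hdd n w, zero_add, zero_add]
    refine AddSubgroup.mem_inf.mpr ⟨?_, (connZ d K L hdd n z).2⟩
    refine AddSubgroup.mem_sup.mpr ⟨d n l, AddSubgroup.mem_map.mpr ⟨l, hl, rfl⟩, 0,
      AddSubgroup.mem_bot.mpr rfl, by rw [add_zero, hdz]⟩

theorem exact_conn_incl (hdd : ∀ n (x : C (n + 2)), d n (d (n + 1) x) = 0)
    (hLK : ∀ n, L n ≤ K n)
    (hdK : ∀ n, ∀ x ∈ K (n + 1), d n x ∈ K n)
    (hdL : ∀ n, ∀ x ∈ L (n + 1), d n x ∈ L n) (n : ℕ) :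
    Function.Exact (connH d K L hdd n)
      (inducedRelMap d hLK (fun _ => le_rfl) n :
        relH d L (fun _ => ⊥) n →+ relH d K (fun _ => ⊥) n) := by
  intro y
  induction y using QuotientAddGroup.induction_on with | _ u => ?_
  rw [inducedRelMap, QuotientAddGroup.map_mk, QuotientAddGroup.eq_zero_iff,
    AddSubgroup.mem_addSubgroupOf, AddSubgroup.coe_inclusion]
  constructor
  · intro hu
    obtain ⟨hb1, hb2⟩ := AddSubgroup.mem_inf.mp hu
    obtain ⟨y, hy, c, hc, hyc⟩ := AddSubgroup.mem_sup.mp hb1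
    obtain ⟨w, hw, rfl⟩ := AddSubgroup.mem_map.mp hy
    have hc0 : c = 0 := AddSubgroup.mem_bot.mp hc
    have hdw : d n w = u.1 := by rw [← hyc, hc0, add_zero]
    have hwZ : w ∈ relZ d K L (n + 1) :=
      (mem_relZ_succ d K L).mpr ⟨hw, by rw [hdw]; exact absZ_le d L n u.2⟩
    refine ⟨QuotientAddGroup.mk ⟨w, hwZ⟩, ?_⟩
    rw [connH, QuotientAddGroup.map_mk, QuotientAddGroup.eq,
      AddSubgroup.mem_addSubgroupOf]
    show -(d n w) + u.1 ∈ relB d L (fun _ => ⊥) n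
    rw [hdw, neg_add_cancel]
    exact zero_mem _
  · rintro ⟨q, hq⟩
    induction q using QuotientAddGroup.induction_on with | _ z => ?_
    rw [connH, QuotientAddGroup.map_mk, QuotientAddGroup.eq,
      AddSubgroup.mem_addSubgroupOf] at hq
    have hq' : -(d n z.1) + u.1 ∈ relB d L (fun _ => ⊥) n := hq
    obtain ⟨hb1, hb2⟩ := AddSubgroup.mem_inf.mp hq'
    obtain ⟨y, hy, c, hc, hyc⟩ := AddSubgroup.mem_sup.mp hb1
    obtain ⟨l, hl, rfl⟩ := AddSubgroup.mem_map.mp hy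
    have hc0 : c = 0 := AddSubgroup.mem_bot.mp hc
    have hu1 : u.1 = d n (z.1 + l) := by
      rw [map_add]
      have : d n l = -(d n z.1) + u.1 := by rw [← hyc, hc0, add_zero]
      rw [this]; abel
    refine AddSubgroup.mem_inf.mpr ⟨?_,
      relZ_mono d hLK (fun _ => le_rfl) n u.2⟩
    refine AddSubgroup.mem_sup.mpr ⟨d n (z.1 + l),
      AddSubgroup.mem_map.mpr ⟨z.1 + l,
        add_mem (relZ_le_fst d K L (n + 1) z.2) (hLK (n + 1) hl), rfl⟩, 0,
      AddSubgroup.mem_bot.mpr rfl, by rw [add_zero, hu1]⟩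

theorem surj_quot_zero :
    Function.Surjective
      (inducedRelMap d (fun _ => le_rfl) (fun _ => bot_le) 0 :
        relH d K (fun _ => ⊥) 0 →+ relH d K L 0) := by
  intro y
  induction y using QuotientAddGroup.induction_on with | _ z => ?_
  refine ⟨QuotientAddGroup.mk ⟨z.1, z.2⟩, ?_⟩
  rw [inducedRelMap, QuotientAddGroup.map_mk]
  congr 1

end Snake

theorem InfC_subcomplex {C : ℕ → Type} [∀ n, AddCommGroup (C n)]
    (d : ∀ n, C (n + 1) →+ C n) (hdd : ∀ n (x : C (n + 2)), d n (d (n + 1) x) = 0)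
    (D : ∀ n, AddSubgroup (C n)) (n : ℕ) :
    ∀ x ∈ InfC d D (n + 1), d n x ∈ InfC d D n := by
  intro x hx
  obtain ⟨h1, h2⟩ := AddSubgroup.mem_inf.mp hx
  cases n with
  | zero => exact h2
  | succ m =>
    refine AddSubgroup.mem_inf.mpr ⟨h2, ?_⟩
    rw [AddSubgroup.mem_comap, hdd m x]
    exact zero_mem _

/-- For any hypergraph pair `(H, A)` there is a long exact sequence of
relative embedded homology
`⋯ → H_n(A) → H_n(H) → H_n(H, A) → H_{n-1}(A) → ⋯`,
where the first two maps are induced by the inclusions and the last is a connecting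
homomorphism (in degree 0 the sequence ends with a surjection `H_0(H) → H_0(H,A) → 0`). -/
theorem relative_embedded_homology_les
    (V : Type) [LinearOrder V] [Fintype V] (G : Type) [AddCommGroup G]
    (H A : Set (Finset V)) (hH : ∀ σ ∈ H, σ.Nonempty) (hA : A ⊆ H) :
    ∃ conn : ∀ n,
        relH (bdry V G) (InfC (bdry V G) fun m => chainsOn V G H m)
            (InfC (bdry V G) fun m => chainsOn V G A m) (n + 1) →+
          relH (bdry V G) (InfC (bdry V G) fun m => chainsOn V G A m) (fun _ => ⊥) n,
      (∀ n, Function.Exact (embIncl V G hA n) (embQuot V G H A n)) ∧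
      (∀ n, Function.Exact (embQuot V G H A (n + 1)) (conn n)) ∧
      (∀ n, Function.Exact (conn n) (embIncl V G hA n)) ∧
      Function.Surjective (embQuot V G H A 0) := by
  classical
  refine ⟨fun n => connH (bdry V G) (InfC (bdry V G) fun m => chainsOn V G H m)
      (InfC (bdry V G) fun m => chainsOn V G A m) (bdry_bdry V G) n, ?_, ?_, ?_, ?_⟩
  · intro n
    exact exact_incl_quot (bdry V G) _ _ (bdry_bdry V G)
      (InfC_mono (bdry V G) fun m => chainsOn_mono V G hA m)
      (InfC_subcomplex (bdry V G) (bdry_bdry V G) _)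
      (InfC_subcomplex (bdry V G) (bdry_bdry V G) _) n
  · intro n
    exact exact_quot_conn (bdry V G) _ _ (bdry_bdry V G)
      (InfC_mono (bdry V G) fun m => chainsOn_mono V G hA m)
      (InfC_subcomplex (bdry V G) (bdry_bdry V G) _)
      (InfC_subcomplex (bdry V G) (bdry_bdry V G) _) n
  · intro n
    exact exact_conn_incl (bdry V G) _ _ (bdry_bdry V G)
      (InfC_mono (bdry V G) fun m => chainsOn_mono V G hA m)
      (InfC_subcomplex (bdry V G) (bdry_bdry V G) _)
      (InfC_subcomplex (bdry V G) (bdry_bdry V G) _) n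
  · exact surj_quot_zero (bdry V G) _ _
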